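/- Let n ≥ 2, let U ⊆ ℂⁿ be an open set on which the coordinates λ₁,…,λₙ are pairwise distinct, and let A₁,…,Aₙ : U → M₂(ℂ) be differentiable traceless maps satisfying the Schlesinger equations: ∂A_j/∂λ_i = [A_i,A_j]/(λ_i−λ_j) for all i ≠ j and ∂A_i/∂λ_i = −Σ_{j≠i}[A_i,A_j]/(λ_i−λ_j) for all i. Define the Hamiltonians H_j = Σ_{i≠j} tr(A_jA_i)/(λ_j−λ_i) for j = 1,…,n. Then ∂H_k/∂λ_j = ∂H_j/∂λ_k on U for all j, k. (Consequently the 1-form Σ_j H_j dλ_j is closed, so locally there exists a τ-function with ∂(ln τ)/∂λ_j = H_j.) -/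

import Mathlib

/-!
Statement 7: the Schlesinger Hamiltonians `H_j = Σ_{i≠j} tr(A_jA_i)/(λ_j−λ_i)`
satisfy `∂H_k/∂λ_j = ∂H_j/∂λ_k`, so that the 1-form `Σ_j H_j dλ_j` is closed
and a τ-function with `∂(ln τ)/∂λ_j = H_j` locally exists.
-/

attribute [local instance] Matrix.normedAddCommGroup Matrix.normedSpace

/-- Partial derivative of `f` with respect to the `i`-th coordinate at `x`. -/
noncomputable def pderiv' {E : Type*} [NormedAddCommGroup E] [NormedSpace ℂ E]
    {n : ℕ} (i : Fin n) (f : (Fin n → ℂ) → E) (x : Fin n → ℂ) : E :=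
  deriv (fun s => f (Function.update x i s)) (x i)

/-- The Schlesinger Hamiltonian `H_j(x) = Σ_{i≠j} tr(A_j A_i)/(x_j − x_i)`. -/
noncomputable def schlesingerHam {n : ℕ}
    (A : Fin n → (Fin n → ℂ) → Matrix (Fin 2) (Fin 2) ℂ)
    (j : Fin n) (x : Fin n → ℂ) : ℂ :=
  ∑ i ∈ Finset.univ.erase j, Matrix.trace (A j x * A i x) / (x j - x i)

/-! Auxiliary lemmas -/


lemma tr_zero1 (X Y : Matrix (Fin 2) (Fin 2) ℂ) : ((X*Y - Y*X)*X).trace = 0 := by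
  rw [Matrix.sub_mul, Matrix.trace_sub, Matrix.trace_mul_comm (Y*X) X, ← mul_assoc, sub_self]

lemma tr_zero2 (X Y : Matrix (Fin 2) (Fin 2) ℂ) : (Y*(X*Y - Y*X)).trace = 0 := by
  rw [Matrix.mul_sub, Matrix.trace_sub, ← mul_assoc, ← mul_assoc,
    Matrix.trace_mul_comm (Y*X) Y, ← mul_assoc, sub_self]

lemma tr_s1 (X Y Z : Matrix (Fin 2) (Fin 2) ℂ) :
    (Y*(X*Z - Z*X)).trace = -((X*Y - Y*X)*Z).trace := by
  simp only [Matrix.mul_sub, Matrix.sub_mul, Matrix.trace_sub, ← mul_assoc]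
  linear_combination (-1 : ℂ) * Matrix.trace_mul_cycle Y Z X

lemma tr_s2 (X Y Z : Matrix (Fin 2) (Fin 2) ℂ) :
    (X*(Y*Z - Z*Y)).trace = ((X*Y - Y*X)*Z).trace := by
  simp only [Matrix.mul_sub, Matrix.sub_mul, Matrix.trace_sub, ← mul_assoc]
  linear_combination (-1 : ℂ) * Matrix.trace_mul_cycle X Z Y

lemma tr_s3 (X Y Z : Matrix (Fin 2) (Fin 2) ℂ) :
    ((Y*X - X*Y)*Z).trace = -((X*Y - Y*X)*Z).trace := by
  simp only [Matrix.sub_mul, Matrix.trace_sub]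
  ring

/-! Differentiability along coordinate lines -/

lemma lineDiff {n : ℕ} (x : Fin n → ℂ) (j : Fin n) :
    Differentiable ℂ (fun s : ℂ => Function.update x j s) := by
  rw [differentiable_pi]
  intro m
  by_cases h : m = j <;> simp [Function.update_apply, h]

lemma hasDerivAt_line {n : ℕ} {U : Set (Fin n → ℂ)} (hU : IsOpen U)
    {A : (Fin n → ℂ) → Matrix (Fin 2) (Fin 2) ℂ} (hA : DifferentiableOn ℂ A U)
    {x : Fin n → ℂ} (hx : x ∈ U) (j : Fin n) :
    HasDerivAt (fun s => A (Function.update x j s)) (pderiv' j A x) (x j) := by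
  have h2 : DifferentiableAt ℂ (fun s => A (Function.update x j s)) (x j) :=
    DifferentiableAt.comp (x j)
      (by rw [Function.update_eq_self]; exact hA.differentiableAt (hU.mem_nhds hx))
      ((lineDiff x j).differentiableAt)
  exact h2.hasDerivAt

lemma trace_mul_expand (M N : Matrix (Fin 2) (Fin 2) ℂ) :
    (M * N).trace = ∑ p : Fin 2, ∑ q : Fin 2, M p q * N q p := by
  simp [Matrix.trace, Matrix.diag, Matrix.mul_apply]

lemma hasDerivAt_trace_mul {f g : ℂ → Matrix (Fin 2) (Fin 2) ℂ}
    {f' g' : Matrix (Fin 2) (Fin 2) ℂ} {t : ℂ}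
    (hf : HasDerivAt f f' t) (hg : HasDerivAt g g' t) :
    HasDerivAt (fun s => (f s * g s).trace) ((f' * g t + f t * g').trace) t := by
  have key : HasDerivAt (fun s => ∑ p : Fin 2, ∑ q : Fin 2, f s p q * g s q p)
      (∑ p : Fin 2, ∑ q : Fin 2, (f' p q * g t q p + f t p q * g' q p)) t := by
    apply HasDerivAt.fun_sum; intro p _
    apply HasDerivAt.fun_sum; intro q _
    exact ((hasDerivAt_pi.mp ((hasDerivAt_pi.mp hf) p)) q).mul
      ((hasDerivAt_pi.mp ((hasDerivAt_pi.mp hg) q)) p)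
  have e1 : (fun s => (f s * g s).trace)
      = fun s => ∑ p : Fin 2, ∑ q : Fin 2, f s p q * g s q p := by
    funext s; exact trace_mul_expand _ _
  rw [e1]
  convert key using 1
  rw [Matrix.trace_add, trace_mul_expand, trace_mul_expand, ← Finset.sum_add_distrib]
  congr 1; funext p
  rw [← Finset.sum_add_distrib]

lemma pderiv_ham {n : ℕ} {U : Set (Fin n → ℂ)} (hU : IsOpen U)
    (hdist : ∀ x ∈ U, ∀ i j : Fin n, i ≠ j → x i ≠ x j)
    {A : Fin n → (Fin n → ℂ) → Matrix (Fin 2) (Fin 2) ℂ}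
    (hA : ∀ i, DifferentiableOn ℂ (A i) U)
    {x : Fin n → ℂ} (hx : x ∈ U) (j k : Fin n) (hjk : j ≠ k) :
    pderiv' j (schlesingerHam A k) x =
      ∑ i ∈ Finset.univ.erase k,
        (if i = j then
          (((pderiv' j (A k) x) * A j x + A k x * (pderiv' j (A j) x)).trace * (x k - x j)
            + (A k x * A j x).trace) / (x k - x j)^2
        else
          ((pderiv' j (A k) x) * A i x + A k x * (pderiv' j (A i) x)).trace / (x k - x i)) := by
  have hline : ∀ i, HasDerivAt (fun s => A i (Function.update x j s)) (pderiv' j (A i) x) (x j) :=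
    fun i => hasDerivAt_line hU (hA i) hx j
  have hkj : k ≠ j := hjk.symm
  have hne : x k - x j ≠ 0 := sub_ne_zero_of_ne (hdist x hx k j hkj)
  apply HasDerivAt.deriv
  simp only [schlesingerHam]
  apply HasDerivAt.fun_sum
  intro i hi
  have htm : HasDerivAt (fun s => (A k (Function.update x j s) * A i (Function.update x j s)).trace)
      (((pderiv' j (A k) x) * A i x + A k x * (pderiv' j (A i) x)).trace) (x j) := by
    have := hasDerivAt_trace_mul (hline k) (hline i)
    simpa [Function.update_eq_self] using this
  by_cases hij : i = j
  · subst hij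
    simp only [if_pos rfl]
    have hD : HasDerivAt (fun s : ℂ => Function.update x i s k - Function.update x i s i) (-1) (x i) := by
      simp only [Function.update_self, Function.update_of_ne hkj]
      simpa using (hasDerivAt_id (x i)).const_sub (x k)
    have := htm.fun_div hD (by simpa [Function.update_of_ne hkj] using hne)
    convert this using 1
    case e'_4 => rfl
    simp only [Function.update_eq_self, Function.update_self, Function.update_of_ne hkj, if_true]
    ring
  · simp only [if_neg hij]
    have hconst : (fun s => (A k (Function.update x j s) * A i (Function.update x j s)).trace
        / (Function.update x j s k - Function.update x j s i))
        = fun s => (A k (Function.update x j s) * A i (Function.update x j s)).trace / (x k - x i) := by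
      funext s
      rw [Function.update_of_ne hkj, Function.update_of_ne (fun h => hij h)]
    rw [hconst]
    exact htm.div_const _

lemma side_eval {n : ℕ} {U : Set (Fin n → ℂ)} (hU : IsOpen U)
    (hdist : ∀ x ∈ U, ∀ i j : Fin n, i ≠ j → x i ≠ x j)
    {A : Fin n → (Fin n → ℂ) → Matrix (Fin 2) (Fin 2) ℂ}
    (hA : ∀ i, DifferentiableOn ℂ (A i) U)
    (hSchOff : ∀ x ∈ U, ∀ i j : Fin n, i ≠ j →
      pderiv' i (A j) x = (x i - x j)⁻¹ • (A i x * A j x - A j x * A i x))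
    (hSchDiag : ∀ x ∈ U, ∀ i : Fin n,
      pderiv' i (A i) x =
        -∑ j ∈ Finset.univ.erase i,
          (x i - x j)⁻¹ • (A i x * A j x - A j x * A i x))
    {x : Fin n → ℂ} (hx : x ∈ U) (j k : Fin n) (hjk : j ≠ k) :
    pderiv' j (schlesingerHam A k) x =
      (A k x * A j x).trace / (x k - x j)^2
      + ∑ i ∈ (Finset.univ.erase k).erase j,
          ( -((x j - x i)⁻¹ * (A k x * (A j x * A i x - A i x * A j x)).trace / (x k - x j))
            + ((x j - x k)⁻¹ * ((A j x * A k x - A k x * A j x) * A i x).trace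
               + (x j - x i)⁻¹ * (A k x * (A j x * A i x - A i x * A j x)).trace) / (x k - x i)) := by
  have hjmem : j ∈ Finset.univ.erase k := Finset.mem_erase.mpr ⟨hjk, Finset.mem_univ j⟩
  have hkmem : k ∈ Finset.univ.erase j := Finset.mem_erase.mpr ⟨hjk.symm, Finset.mem_univ k⟩
  have hxkj : x k - x j ≠ 0 := sub_ne_zero_of_ne (hdist x hx k j hjk.symm)
  have hxjk : x j - x k ≠ 0 := sub_ne_zero_of_ne (hdist x hx j k hjk)
  rw [pderiv_ham hU hdist hA hx j k hjk, ← Finset.add_sum_erase _ _ hjmem, if_pos rfl]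
  have h1 : ∑ i ∈ (Finset.univ.erase k).erase j,
      (if i = j then
          (((pderiv' j (A k) x) * A j x + A k x * (pderiv' j (A j) x)).trace * (x k - x j)
            + (A k x * A j x).trace) / (x k - x j)^2
        else
          ((pderiv' j (A k) x) * A i x + A k x * (pderiv' j (A i) x)).trace / (x k - x i))
      = ∑ i ∈ (Finset.univ.erase k).erase j,
          ((x j - x k)⁻¹ * ((A j x * A k x - A k x * A j x) * A i x).trace
            + (x j - x i)⁻¹ * (A k x * (A j x * A i x - A i x * A j x)).trace) / (x k - x i) := by
    apply Finset.sum_congr rfl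
    intro i hi
    have hij : i ≠ j := (Finset.mem_erase.mp hi).1
    rw [if_neg hij, hSchOff x hx j k hjk, hSchOff x hx j i (fun h => hij h.symm)]
    rw [Matrix.smul_mul, Matrix.mul_smul, Matrix.trace_add, Matrix.trace_smul,
      Matrix.trace_smul, smul_eq_mul, smul_eq_mul]
  rw [h1]
  -- now evaluate the head term
  rw [hSchOff x hx j k hjk, hSchDiag x hx j]
  simp only [Matrix.smul_mul, Matrix.mul_neg, Finset.mul_sum, Matrix.mul_smul,
    Matrix.trace_add, Matrix.trace_neg, Matrix.trace_sum, Matrix.trace_smul, smul_eq_mul,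
    tr_zero1, mul_zero, zero_add, add_zero]
  rw [← Finset.add_sum_erase _ _ hkmem, tr_zero2, Finset.erase_right_comm, mul_zero, zero_add]
  -- now goal is pure field algebra in the two sums and traces
  rw [Finset.sum_add_distrib]
  have hs : (∑ i ∈ (Finset.univ.erase k).erase j,
        -((x j - x i)⁻¹ * (A k x * (A j x * A i x - A i x * A j x)).trace / (x k - x j)))
      = -((∑ i ∈ (Finset.univ.erase k).erase j,
          (x j - x i)⁻¹ * (A k x * (A j x * A i x - A i x * A j x)).trace) / (x k - x j)) := by
    rw [Finset.sum_neg_distrib, Finset.sum_div]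
  rw [hs]
  field_simp
  ring

theorem schlesinger_hamiltonians_closed_one_form
    (n : ℕ) (hn : 2 ≤ n)
    (U : Set (Fin n → ℂ)) (hU : IsOpen U)
    (hdist : ∀ x ∈ U, ∀ i j : Fin n, i ≠ j → x i ≠ x j)
    (A : Fin n → (Fin n → ℂ) → Matrix (Fin 2) (Fin 2) ℂ)
    (hA : ∀ j, DifferentiableOn ℂ (A j) U)
    (htr : ∀ j, ∀ x ∈ U, Matrix.trace (A j x) = 0)
    (hSchOff : ∀ x ∈ U, ∀ i j : Fin n, i ≠ j →
      pderiv' i (A j) x = (x i - x j)⁻¹ • (A i x * A j x - A j x * A i x))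
    (hSchDiag : ∀ x ∈ U, ∀ i : Fin n,
      pderiv' i (A i) x =
        -∑ j ∈ Finset.univ.erase i,
          (x i - x j)⁻¹ • (A i x * A j x - A j x * A i x)) :
    ∀ x ∈ U, ∀ j k : Fin n,
      pderiv' j (schlesingerHam A k) x = pderiv' k (schlesingerHam A j) x := by
  intro x hx j k
  rcases eq_or_ne j k with rfl | hjk
  · rfl
  rw [side_eval hU hdist hA hSchOff hSchDiag hx j k hjk,
      side_eval hU hdist hA hSchOff hSchDiag hx k j hjk.symm,
      Finset.erase_right_comm]
  have hxkj : x k - x j ≠ 0 := sub_ne_zero_of_ne (hdist x hx k j hjk.symm)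
  have hxjk : x j - x k ≠ 0 := sub_ne_zero_of_ne (hdist x hx j k hjk)
  congr 1
  · rw [Matrix.trace_mul_comm]
    congr 1
    ring
  · apply Finset.sum_congr rfl
    intro i hi
    have hik : i ≠ k := (Finset.mem_erase.mp hi).1
    have hij : i ≠ j := (Finset.mem_erase.mp (Finset.mem_erase.mp hi).2).1
    have hxji : x j - x i ≠ 0 := sub_ne_zero_of_ne (hdist x hx j i hij.symm)
    have hxki : x k - x i ≠ 0 := sub_ne_zero_of_ne (hdist x hx k i hik.symm)
    rw [tr_s1 (A j x) (A k x) (A i x), tr_s2 (A j x) (A k x) (A i x),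
      tr_s3 (A j x) (A k x) (A i x)]
    field_simp
    ring
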